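/- Let S ∈ ℝ^{N×N} be symmetric with orthonormal eigenbasis v_1, …, v_N ∈ ℝ^N and pairwise distinct eigenvalues λ_1, …, λ_N ∈ ℝ, and let x : Ω → ℝ^N be a white random vector on a probability space (E[x_i] = 0, E[x_i x_j] = δ_{ij}, products integrable). Then for every j ∈ {1,…,N} there exist coefficients h_0, …, h_{N−1} ∈ ℝ such that the random vector y := (Σ_{k=0}^{N−1} h_k S^k x)², with the square taken entrywise, satisfies E[y_i] = ((v_j)_i)² = |v_j|_i² for every i ∈ {1,…,N}; that is, a single graph-filter layer with squaring nonlinearity computes, in expectation, the entrywise squared absolute value of any chosen eigenvector of S. -/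

import Mathlib

open Matrix BigOperators MeasureTheory Polynomial

/-- Let `S` be symmetric with orthonormal eigenbasis `v₁,…,v_N` and pairwise distinct
eigenvalues, and let `x` be a white random vector. Then for every `j` there exist
coefficients `h₀,…,h_{N−1}` such that the random vector
`y = (∑_{k<N} h_k Sᵏ x)²` (entrywise square) satisfies `E[yᵢ] = ((vⱼ)ᵢ)²` for all `i`:
a graph-filter layer with squaring nonlinearity computes, in expectation, the
entrywise squared absolute value of any chosen eigenvector of `S`. -/
theorem gnn_computes_abs_eigenvector {N : ℕ} {Ω : Type*}
    [MeasureSpace Ω] [IsProbabilityMeasure (volume : Measure Ω)]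
    (S : Matrix (Fin N) (Fin N) ℝ) (hsymm : S.IsSymm)
    (v : Fin N → (Fin N → ℝ)) (lam : Fin N → ℝ)
    (hS : S = ∑ n, lam n • vecMulVec (v n) (v n))
    (horth : ∀ n m, v n ⬝ᵥ v m = if n = m then 1 else 0)
    (hdist : Function.Injective lam)
    (x : Ω → Fin N → ℝ)
    (hint : ∀ i j : Fin N, Integrable (fun ω => x ω i * x ω j))
    (hmean : ∀ i : Fin N, ∫ ω, x ω i = 0)
    (hcov : ∀ i j : Fin N, (∫ ω, x ω i * x ω j) = if i = j then 1 else 0) :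
    ∀ j : Fin N, ∃ h : Fin N → ℝ, ∀ i : Fin N,
      (∫ ω, ((∑ k : Fin N, h k • S ^ (k : ℕ)).mulVec (x ω) i) ^ 2)
        = (v j i) ^ 2 := by
  intro j
  have hN : 0 < N := j.pos
  set P : Fin N → Matrix (Fin N) (Fin N) ℝ := fun n => vecMulVec (v n) (v n) with hP
  -- completeness: ∑ P n = 1
  have hcomp : ∑ n, P n = 1 := by
    have h1 : (Matrix.of v) * (Matrix.of v)ᵀ = 1 := by
      ext n m
      have := horth n m
      simpa [Matrix.mul_apply, Matrix.one_apply, dotProduct] using this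
    have h2 := mul_eq_one_comm.mp h1
    ext i i'
    have := congrFun (congrFun h2 i) i'
    simpa [hP, Matrix.mul_apply, Matrix.sum_apply, vecMulVec_apply, Matrix.one_apply] using this
  have hmul : ∀ (a b c d : Fin N → ℝ),
      vecMulVec a b * vecMulVec c d = (b ⬝ᵥ c) • vecMulVec a d := by
    intro a b c d
    ext i k
    simp only [Matrix.mul_apply, vecMulVec_apply, Matrix.smul_apply, dotProduct,
      smul_eq_mul, Finset.sum_mul]
    apply Finset.sum_congr rfl
    intros; ring
  have hSpow : ∀ k : ℕ, S ^ k = ∑ n, (lam n ^ k) • P n := by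
    intro k
    induction k with
    | zero => simpa using hcomp.symm
    | succ k ih =>
      rw [pow_succ, ih, hS, Finset.sum_mul_sum]
      apply Finset.sum_congr rfl
      intro n _
      rw [Finset.sum_eq_single n]
      · rw [smul_mul_assoc, mul_smul_comm, hP, hmul, horth, if_pos rfl, one_smul,
          smul_smul, ← pow_succ]
      · intro m _ hmn
        rw [smul_mul_assoc, mul_smul_comm, hP, hmul, horth, if_neg (Ne.symm hmn),
          zero_smul, smul_zero, smul_zero]
      · intro h; exact absurd (Finset.mem_univ n) h
  -- Lagrange interpolation
  set p : Polynomial ℝ :=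
    Lagrange.interpolate Finset.univ lam (fun n => if n = j then (1:ℝ) else 0) with hp
  have hinj : Set.InjOn lam (Finset.univ : Finset (Fin N)) := hdist.injOn
  have hdeg : p.degree < (N : ℕ) := by
    have := Lagrange.degree_interpolate_lt (r := fun n => if n = j then (1:ℝ) else 0) hinj
    rwa [Finset.card_univ, Fintype.card_fin] at this
  have hnd : p.natDegree < N := by
    rcases eq_or_ne p 0 with h | h
    · simpa [h] using hN
    · exact (Polynomial.natDegree_lt_iff_degree_lt h).mpr (by exact_mod_cast hdeg)
  have heval : ∀ n, p.eval (lam n) = if n = j then 1 else 0 := fun n =>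
    Lagrange.eval_interpolate_at_node _ hinj (Finset.mem_univ n)
  have hfilter : (∑ k : Fin N, p.coeff (k : ℕ) • S ^ (k : ℕ)) = P j := by
    calc ∑ k : Fin N, p.coeff (k : ℕ) • S ^ (k : ℕ)
        = ∑ k : Fin N, ∑ n, (p.coeff (k : ℕ) * lam n ^ (k : ℕ)) • P n := by
          apply Finset.sum_congr rfl
          intro k _
          rw [hSpow, Finset.smul_sum]
          simp [smul_smul]
      _ = ∑ n, (∑ k : Fin N, p.coeff (k : ℕ) * lam n ^ (k : ℕ)) • P n := by
          rw [Finset.sum_comm]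
          exact Finset.sum_congr rfl fun n _ => (Finset.sum_smul).symm
      _ = ∑ n, (p.eval (lam n)) • P n := by
          apply Finset.sum_congr rfl
          intro n _
          congr 1
          rw [Polynomial.eval_eq_sum_range' hnd, ← Fin.sum_univ_eq_sum_range]
      _ = P j := by
          simp [heval, ite_smul]
  refine ⟨fun k => p.coeff (k : ℕ), fun i => ?_⟩
  have hmv : ∀ w : Fin N → ℝ, (P j).mulVec w i = v j i * (v j ⬝ᵥ w) := by
    intro w
    simp [hP, Matrix.mulVec, vecMulVec_apply, dotProduct, Finset.mul_sum, mul_assoc]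
  have key : (∫ ω, (v j ⬝ᵥ x ω) ^ 2) = 1 := by
    have expand : ∀ ω : Ω, (v j ⬝ᵥ x ω) ^ 2
        = ∑ m, ∑ l, (v j m * v j l) * (x ω m * x ω l) := by
      intro ω
      rw [sq, dotProduct, Finset.sum_mul_sum]
      apply Finset.sum_congr rfl; intro m _
      apply Finset.sum_congr rfl; intro l _
      ring
    simp_rw [expand]
    rw [integral_finset_sum _ (fun m _ =>
      integrable_finset_sum _ (fun l _ => (hint m l).const_mul _))]
    have hm : ∀ m : Fin N,
        (∫ ω, ∑ l, (v j m * v j l) * (x ω m * x ω l)) = (v j m) ^ 2 := by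
      intro m
      rw [integral_finset_sum _ (fun l _ => (hint m l).const_mul _)]
      have hl : ∀ l : Fin N,
          (∫ ω, (v j m * v j l) * (x ω m * x ω l)) = if m = l then (v j m) ^ 2 else 0 := by
        intro l
        rw [MeasureTheory.integral_const_mul, hcov]
        split_ifs with h
        · subst h; ring
        · ring
      simp [hl]
    simp_rw [hm]
    have := horth j j
    simpa [dotProduct, sq, if_pos] using this
  calc (∫ ω, ((∑ k : Fin N, (fun k : Fin N => p.coeff (k : ℕ)) k • S ^ (k : ℕ)).mulVec (x ω) i) ^ 2)
      = ∫ ω, (v j i) ^ 2 * (v j ⬝ᵥ x ω) ^ 2 := by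
        apply congrArg
        funext ω
        rw [hfilter, hmv]
        ring
    _ = (v j i) ^ 2 * ∫ ω, (v j ⬝ᵥ x ω) ^ 2 := MeasureTheory.integral_const_mul _ _
    _ = (v j i) ^ 2 := by rw [key, mul_one]
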